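/- Let f be a real, even, centered trigonometric polynomial of degree D, not identically zero, and let (a_n) be a sequence of positive integers such that for all d, d' ∈ {1,…,D}, the number of pairs (ℓ,ℓ') ∈ {1,…,n}^2 with ℓ ≠ ℓ' and d a_ℓ = d' a_{ℓ'} is o(n). Then there exists a constant c = c(f,a) > 0 such that E[S_n^2] ≥ c·n for all n, where S_n = Σ_{j=1}^n f(a_j U), U ~ Unif(0,1). -/

import Mathlib

set_option maxHeartbeats 1000000

open Real Filter intervalIntegral

lemma intCos (m : ℤ) : ∫ x in (0:ℝ)..1, Real.cos (2*π*m*x) = if m = 0 then 1 else 0 := by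
  rcases eq_or_ne m 0 with h | h
  · simp [h]
  rw [if_neg h]
  have hc : (2*π*(m:ℝ)) ≠ 0 := by
    have : (m:ℝ) ≠ 0 := Int.cast_ne_zero.mpr h
    positivity
  have hI := intervalIntegral.integral_comp_mul_left (c := 2*π*(m:ℝ)) (a := (0:ℝ)) (b := 1)
    (f := Real.cos) hc
  simp only [mul_zero, mul_one] at hI
  rw [show (fun x => Real.cos (2*π*m*x)) = (fun x => Real.cos ((2*π*m)*x)) by ring_nf] at *
  rw [hI, integral_cos]
  have hs : Real.sin (2*π*m) = 0 := by
    have := Real.sin_int_mul_pi (2*m)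
    push_cast at this ⊢
    rw [show 2*π*(m:ℝ) = (2*m:ℝ)*π by ring]
    exact this
  simp [hs]

lemma intCosCos (m m' : ℤ) : ∫ x in (0:ℝ)..1, Real.cos (2*π*m*x) * Real.cos (2*π*m'*x)
    = ((if m = m' then 1 else 0) + (if m = -m' then 1 else 0))/2 := by
  have hprod : ∀ x : ℝ, Real.cos (2*π*m*x) * Real.cos (2*π*m'*x)
      = (Real.cos (2*π*(m-m':ℤ)*x) + Real.cos (2*π*(m+m':ℤ)*x))/2 := by
    intro x
    have h1 := Real.cos_add (2*π*m*x) (2*π*m'*x)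
    have h2 := Real.cos_sub (2*π*m*x) (2*π*m'*x)
    have e1 : 2*π*((m-m':ℤ):ℝ)*x = 2*π*m*x - 2*π*m'*x := by push_cast; ring
    have e2 : 2*π*((m+m':ℤ):ℝ)*x = 2*π*m*x + 2*π*m'*x := by push_cast; ring
    rw [e1, e2, h1, h2]; ring
  rw [show (fun x => Real.cos (2*π*m*x) * Real.cos (2*π*m'*x)) = fun x =>
    (Real.cos (2*π*(m-m':ℤ)*x) + Real.cos (2*π*(m+m':ℤ)*x))/2 from funext hprod]
  have i1 : IntervalIntegrable (fun x => Real.cos (2*π*((m-m':ℤ):ℝ)*x)) MeasureTheory.volume 0 1 := by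
    apply Continuous.intervalIntegrable; fun_prop
  have i2 : IntervalIntegrable (fun x => Real.cos (2*π*((m+m':ℤ):ℝ)*x)) MeasureTheory.volume 0 1 := by
    apply Continuous.intervalIntegrable; fun_prop
  rw [intervalIntegral.integral_div, intervalIntegral.integral_add i1 i2, intCos, intCos]
  congr 2
  · split_ifs with h1 h2 <;> first | rfl | omega
  · split_ifs with h1 h2 <;> first | rfl | omega

lemma master (D n : ℕ) (c : ℤ → ℝ) (f : ℝ → ℝ)
    (hf : ∀ x, f x = ∑ d ∈ Finset.Icc (-(D:ℤ)) D, c d * Real.cos (2 * π * d * x))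
    (a : ℕ → ℕ) :
    ∫ x in (0:ℝ)..1, (∑ j ∈ Finset.Icc 1 n, f (a j * x)) ^ 2
    = ∑ p ∈ (Finset.Icc 1 n) ×ˢ (Finset.Icc (-(D:ℤ)) D),
        ∑ q ∈ (Finset.Icc 1 n) ×ˢ (Finset.Icc (-(D:ℤ)) D),
        c p.2 * c q.2 *
          (((if p.2 * (a p.1 : ℤ) = q.2 * (a q.1 : ℤ) then (1:ℝ) else 0)
            + (if p.2 * (a p.1 : ℤ) = -(q.2 * (a q.1 : ℤ)) then 1 else 0))/2) := by
  set T := (Finset.Icc 1 n) ×ˢ (Finset.Icc (-(D:ℤ)) D) with hT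
  have hS : ∀ x : ℝ, (∑ j ∈ Finset.Icc 1 n, f (a j * x))
      = ∑ p ∈ T, c p.2 * Real.cos (2*π*((p.2 * (a p.1 : ℤ) : ℤ) : ℝ)*x) := by
    intro x
    rw [hT, Finset.sum_product]
    refine Finset.sum_congr rfl fun j _ => ?_
    rw [hf]
    refine Finset.sum_congr rfl fun d _ => ?_
    congr 1
    push_cast
    ring
  have hsq : ∀ x : ℝ, (∑ j ∈ Finset.Icc 1 n, f (a j * x)) ^ 2
      = ∑ p ∈ T, ∑ q ∈ T, (c p.2 * c q.2) *
          (Real.cos (2*π*((p.2 * (a p.1 : ℤ) : ℤ) : ℝ)*x) * Real.cos (2*π*((q.2 * (a q.1 : ℤ) : ℤ) : ℝ)*x)) := by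
    intro x
    rw [hS x, sq, Finset.sum_mul_sum]
    refine Finset.sum_congr rfl fun p _ => Finset.sum_congr rfl fun q _ => ?_
    ring_nf
  rw [intervalIntegral.integral_congr (g := fun x => ∑ p ∈ T, ∑ q ∈ T, (c p.2 * c q.2) *
          (Real.cos (2*π*((p.2 * (a p.1 : ℤ) : ℤ) : ℝ)*x) * Real.cos (2*π*((q.2 * (a q.1 : ℤ) : ℤ) : ℝ)*x)))
    (fun x _ => hsq x)]
  rw [intervalIntegral.integral_finset_sum (fun p _ => by
    apply Continuous.intervalIntegrable; fun_prop)]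
  refine Finset.sum_congr rfl fun p _ => ?_
  rw [intervalIntegral.integral_finset_sum (fun q _ => by
    apply Continuous.intervalIntegrable; fun_prop)]
  refine Finset.sum_congr rfl fun q _ => ?_
  rw [intervalIntegral.integral_const_mul, intCosCos]


open Real Filter in
/-- If `f ≢ 0` is a real, even, centered trigonometric polynomial of degree `D` and the number
of off-diagonal solutions of `d a_ℓ = d' a_{ℓ'}` with `ℓ, ℓ' ∈ {1,…,n}` is `o(n)` for each
`d, d' ∈ {1,…,D}`, then there is `C > 0` with `E[S_n ^ 2] ≥ C n` for all `n`. -/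
theorem stmt4 (D : ℕ) (c : ℤ → ℝ) (hsym : ∀ d, c (-d) = c d) (h0 : c 0 = 0)
    (hne : ∃ d ∈ Finset.Icc (1:ℤ) D, c d ≠ 0)
    (f : ℝ → ℝ)
    (hf : ∀ x, f x = ∑ d ∈ Finset.Icc (-(D:ℤ)) D, c d * Real.cos (2 * π * d * x))
    (a : ℕ → ℕ) (hpos : ∀ n, 0 < a n)
    (hcount : ∀ d ∈ Finset.Icc (1:ℤ) D, ∀ d' ∈ Finset.Icc (1:ℤ) D,
      (fun n : ℕ => ((((Finset.Icc 1 n) ×ˢ (Finset.Icc 1 n)).filter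
          (fun p : ℕ × ℕ => p.1 ≠ p.2 ∧ d * a p.1 = d' * a p.2)).card : ℝ))
        =o[atTop] (fun n : ℕ => (n : ℝ))) :
    ∃ C > (0:ℝ), ∀ n : ℕ,
      C * n ≤ ∫ x in (0:ℝ)..1, (∑ j ∈ Finset.Icc 1 n, f (a j * x)) ^ 2 := by
  classical
  set E := Finset.Icc (-(D:ℤ)) (D:ℤ) with hE
  set k : ℕ × ℤ → ℤ := fun p => p.2 * (a p.1 : ℤ) with hk
  set R : ℕ → ℝ := fun n => ∑ p ∈ (Finset.Icc 1 n) ×ˢ E, ∑ q ∈ (Finset.Icc 1 n) ×ˢ E,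
      c p.2 * c q.2 * (if k p = k q then (1:ℝ) else 0) with hR
  -- negation symmetry of the inner sum
  have hneg : ∀ (n : ℕ) (p : ℕ × ℤ),
      ∑ q ∈ (Finset.Icc 1 n) ×ˢ E, c q.2 * (if k p = -(k q) then (1:ℝ) else 0)
      = ∑ q ∈ (Finset.Icc 1 n) ×ˢ E, c q.2 * (if k p = k q then (1:ℝ) else 0) := by
    intro n p
    refine Finset.sum_bij' (fun q _ => (q.1, -q.2)) (fun q _ => (q.1, -q.2)) ?_ ?_ ?_ ?_ ?_
    · intro q hq
      simp only [hE, Finset.mem_product, Finset.mem_Icc] at hq ⊢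
      omega
    · intro q hq
      simp only [hE, Finset.mem_product, Finset.mem_Icc] at hq ⊢
      omega
    · intro q _; simp
    · intro q _; simp
    · intro q hq
      simp only [hk, hsym]
      congr 1
      congr 1
      simp only [neg_mul, neg_neg]
  -- the integral equals R n
  have hInt : ∀ n : ℕ, (∫ x in (0:ℝ)..1, (∑ j ∈ Finset.Icc 1 n, f (a j * x)) ^ 2) = R n := by
    intro n
    rw [master D n c f hf a, hR]
    refine Finset.sum_congr rfl fun p hp => ?_
    have h1 : ∑ q ∈ (Finset.Icc 1 n) ×ˢ E, c p.2 * c q.2 *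
        (((if k p = k q then (1:ℝ) else 0) + (if k p = -(k q) then 1 else 0))/2)
        = (∑ q ∈ (Finset.Icc 1 n) ×ˢ E, c p.2 * (c q.2 * (if k p = k q then (1:ℝ) else 0))
          + ∑ q ∈ (Finset.Icc 1 n) ×ˢ E, c p.2 * (c q.2 * (if k p = -(k q) then (1:ℝ) else 0)))/2 := by
      rw [← Finset.sum_add_distrib, Finset.sum_div]
      exact Finset.sum_congr rfl fun q _ => by ring
    rw [show ∑ q ∈ (Finset.Icc 1 n) ×ˢ E,
        c p.2 * c q.2 * (((if p.2 * (a p.1 : ℤ) = q.2 * (a q.1 : ℤ) then (1:ℝ) else 0)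
            + (if p.2 * (a p.1 : ℤ) = -(q.2 * (a q.1 : ℤ)) then 1 else 0))/2)
      = ∑ q ∈ (Finset.Icc 1 n) ×ˢ E, c p.2 * c q.2 *
        (((if k p = k q then (1:ℝ) else 0) + (if k p = -(k q) then 1 else 0))/2) from rfl]
    rw [h1, ← Finset.mul_sum, ← Finset.mul_sum, hneg n p, add_self_div_two, Finset.mul_sum]
    exact Finset.sum_congr rfl fun q _ => by ring
  -- Parseval regrouping
  have parseval : ∀ n : ℕ, R n = ∑ m ∈ ((Finset.Icc 1 n ×ˢ E).image k),
      (∑ p ∈ (Finset.Icc 1 n ×ˢ E).filter (fun p => k p = m), c p.2)^2 := by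
    intro n
    set T := Finset.Icc 1 n ×ˢ E with hT
    have heq : ∀ p ∈ T, (∑ q ∈ T.filter (fun q => k q = k p), c q.2)^2
        = ∑ x ∈ T.filter (fun x => k x = k p),
            (c x.2 * ∑ q ∈ T.filter (fun q => k q = k x), c q.2) := by
      intro p hp
      rw [sq, Finset.sum_mul]
      refine Finset.sum_congr rfl fun x hx => ?_
      have hkx : k x = k p := (Finset.mem_filter.mp hx).2
      rw [hkx]
    have himg := Finset.sum_image' (s := T) (g := k)
      (f := fun m => (∑ p ∈ T.filter (fun p => k p = m), c p.2)^2)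
      (fun p => c p.2 * ∑ q ∈ T.filter (fun q => k q = k p), c q.2) heq
    rw [himg, hR]
    refine Finset.sum_congr rfl fun p _ => ?_
    rw [Finset.sum_filter, Finset.mul_sum]
    refine Finset.sum_congr rfl fun q _ => ?_
    by_cases h : k q = k p
    · rw [if_pos h, if_pos h.symm]; ring
    · rw [if_neg h, if_neg (fun hh => h hh.symm)]; ring
  -- positivity of R n for n ≥ 1
  have hRpos : ∀ n : ℕ, 1 ≤ n → 0 < R n := by
    intro n hn
    obtain ⟨d0, hd0mem, hd0ne, hd0max⟩ : ∃ d0, d0 ∈ Finset.Icc (1:ℤ) D ∧ c d0 ≠ 0 ∧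
        ∀ d ∈ Finset.Icc (1:ℤ) D, d0 < d → c d = 0 := by
      set F := (Finset.Icc (1:ℤ) D).filter (fun d => c d ≠ 0) with hF
      have hFne : F.Nonempty := by
        obtain ⟨d, hd, hcd⟩ := hne
        exact ⟨d, Finset.mem_filter.mpr ⟨hd, hcd⟩⟩
      refine ⟨F.max' hFne, (Finset.mem_filter.mp (F.max'_mem hFne)).1,
        (Finset.mem_filter.mp (F.max'_mem hFne)).2, ?_⟩
      intro d hd hlt
      by_contra hcd
      exact absurd (F.le_max' d (Finset.mem_filter.mpr ⟨hd, hcd⟩)) (not_le.mpr hlt)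
    have hd01 : (1:ℤ) ≤ d0 := (Finset.mem_Icc.mp hd0mem).1
    have hd0D : d0 ≤ (D:ℤ) := (Finset.mem_Icc.mp hd0mem).2
    have hSne : (Finset.Icc 1 n).Nonempty := ⟨1, Finset.mem_Icc.mpr ⟨le_refl 1, hn⟩⟩
    set A : ℕ := ((Finset.Icc 1 n).image a).max' (hSne.image a) with hA
    obtain ⟨j0, hj0mem, hj0A⟩ := Finset.mem_image.mp (Finset.max'_mem _ (hSne.image a))
    have hAle : ∀ j ∈ Finset.Icc 1 n, a j ≤ A := fun j hj =>
      Finset.le_max' _ _ (Finset.mem_image_of_mem a hj)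
    have hApos : 0 < A := by rw [hA, ← hj0A]; exact hpos j0
    set T := Finset.Icc 1 n ×ˢ E with hT
    set m0 : ℤ := d0 * (A:ℤ) with hm0
    have hj0T : (j0, d0) ∈ T := by
      rw [hT, Finset.mem_product]
      exact ⟨hj0mem, by rw [hE, Finset.mem_Icc]; omega⟩
    have hj0A' : a j0 = A := by rw [hA, ← hj0A]
    have hkj0 : k (j0, d0) = m0 := by
      simp only [hk, hm0]
      rw [hj0A']
    have hm0mem : m0 ∈ T.image k := Finset.mem_image.mpr ⟨(j0, d0), hj0T, hkj0⟩
    rw [parseval n]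
    refine Finset.sum_pos' (fun m _ => sq_nonneg _) ⟨m0, hm0mem, ?_⟩
    -- the fiber sum at m0 is c d0 times a positive count
    have hfib : ∀ p ∈ T.filter (fun p => k p = m0), c p.2
        = if p.2 = d0 ∧ a p.1 = A then c d0 else 0 := by
      intro p hp
      obtain ⟨hpT, hkp⟩ := Finset.mem_filter.mp hp
      obtain ⟨hp1, hp2⟩ := Finset.mem_product.mp hpT
      split_ifs with h
      · rw [h.1]
      · by_contra hc
        apply h
        have hap : (0:ℤ) < (a p.1 : ℤ) := by exact_mod_cast hpos p.1
        have haA : ((a p.1 : ℤ)) ≤ (A:ℤ) := by exact_mod_cast hAle p.1 hp1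
        have hApz : (0:ℤ) < (A:ℤ) := by exact_mod_cast hApos
        have hkp' : p.2 * (a p.1 : ℤ) = d0 * (A:ℤ) := hkp
        have hp2pos : 0 < p.2 := by nlinarith
        have hp2D : p.2 ≤ (D:ℤ) := by
          rw [hE, Finset.mem_Icc] at hp2; exact hp2.2
        have hp2le : p.2 ≤ d0 := by
          by_contra hgt
          exact hc (hd0max p.2 (Finset.mem_Icc.mpr ⟨by omega, hp2D⟩) (by omega))
        have e1 : (d0 - p.2) * (A:ℤ) = p.2 * ((a p.1 : ℤ) - A) := by linarith [hkp', mul_sub p.2 ((a p.1 : ℤ)) ((A:ℤ)), sub_mul d0 p.2 ((A:ℤ))]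
        have e2 : (d0 - p.2) * (A:ℤ) = 0 := le_antisymm
          (e1 ▸ mul_nonpos_of_nonneg_of_nonpos (le_of_lt hp2pos) (by linarith))
          (mul_nonneg (by linarith) (le_of_lt hApz))
        have hp2d0 : p.2 = d0 := by
          rcases mul_eq_zero.mp e2 with h' | h'
          · omega
          · omega
        refine ⟨hp2d0, ?_⟩
        have : (a p.1 : ℤ) = (A:ℤ) := by
          rw [hp2d0] at hkp'
          have := mul_left_cancel₀ (by omega : d0 ≠ 0) hkp'
          exact this
        exact_mod_cast this
    rw [Finset.sum_congr rfl hfib]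
    rw [Finset.sum_ite, Finset.sum_const, Finset.sum_const_zero, add_zero]
    have hcard : 0 < ((T.filter (fun p => k p = m0)).filter
        (fun p => p.2 = d0 ∧ a p.1 = A)).card := by
      rw [Finset.card_pos]
      refine ⟨(j0, d0), Finset.mem_filter.mpr ⟨Finset.mem_filter.mpr ⟨hj0T, hkj0⟩, rfl, hj0A'⟩⟩
    have : ((T.filter (fun p => k p = m0)).filter
        (fun p => p.2 = d0 ∧ a p.1 = A)).card • c d0 ≠ 0 := by
      rw [nsmul_eq_mul]
      exact mul_ne_zero (by positivity) hd0ne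
    positivity
  -- diagonal / off-diagonal split
  set s2 : ℝ := ∑ d ∈ E, (c d)^2 with hs2
  set Ifun : ℕ × ℕ → ℝ := fun r => ∑ d ∈ E, ∑ d' ∈ E,
      c d * c d' * (if d * (a r.1 : ℤ) = d' * (a r.2 : ℤ) then (1:ℝ) else 0) with hIfun
  set N : ℤ → ℤ → ℕ → ℕ := fun d d' n => (((Finset.Icc 1 n) ×ˢ (Finset.Icc 1 n)).filter
      (fun p : ℕ × ℕ => p.1 ≠ p.2 ∧ d * a p.1 = d' * a p.2)).card with hN
  set G : ℕ → ℝ := fun n => ∑ r ∈ E ×ˢ E, |c r.1| * |c r.2| * (N r.1 r.2 n : ℝ) with hG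
  have hs2pos : 0 < s2 := by
    obtain ⟨d1, hd1, hcd1⟩ := hne
    have hd1E : d1 ∈ E := by
      rw [hE, Finset.mem_Icc]; rw [Finset.mem_Icc] at hd1; omega
    calc (0:ℝ) < (c d1)^2 := by positivity
      _ ≤ s2 := Finset.single_le_sum (fun d _ => sq_nonneg (c d)) hd1E
  have hsplit : ∀ n : ℕ, R n = s2 * n + ∑ r ∈ (Finset.Icc 1 n).offDiag, Ifun r := by
    intro n
    have h1 : R n = ∑ r ∈ (Finset.Icc 1 n) ×ˢ (Finset.Icc 1 n), Ifun r := by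
      calc R n = ∑ j ∈ Finset.Icc 1 n, ∑ d ∈ E, ∑ j' ∈ Finset.Icc 1 n, ∑ d' ∈ E,
            c d * c d' * (if k (j, d) = k (j', d') then (1:ℝ) else 0) := by
            rw [hR]
            dsimp only
            rw [Finset.sum_product]
            refine Finset.sum_congr rfl fun j _ => Finset.sum_congr rfl fun d _ => ?_
            rw [Finset.sum_product]
        _ = ∑ j ∈ Finset.Icc 1 n, ∑ j' ∈ Finset.Icc 1 n, ∑ d ∈ E, ∑ d' ∈ E,
            c d * c d' * (if k (j, d) = k (j', d') then (1:ℝ) else 0) :=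
            Finset.sum_congr rfl fun j _ => Finset.sum_comm
        _ = ∑ r ∈ (Finset.Icc 1 n) ×ˢ (Finset.Icc 1 n), Ifun r := by
            rw [Finset.sum_product]
    rw [h1, ← Finset.diag_union_offDiag (Finset.Icc 1 n),
      Finset.sum_union (Finset.disjoint_diag_offDiag _), Finset.sum_diag]
    congr 1
    have hdiag : ∀ j : ℕ, Ifun (j, j) = s2 := by
      intro j
      rw [hIfun, hs2]
      dsimp only
      refine Finset.sum_congr rfl fun d hd => ?_
      have haj : ((a j : ℤ)) ≠ 0 := by
        have := hpos j; exact_mod_cast this.ne'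
      have hterm : ∀ d' ∈ E, c d * c d' * (if d * (a j : ℤ) = d' * (a j : ℤ) then (1:ℝ) else 0)
          = if d' = d then c d * c d' else 0 := by
        intro d' _
        by_cases h : d' = d
        · rw [if_pos h, if_pos (by rw [h])]; ring
        · rw [if_neg (fun heq => h (mul_right_cancel₀ haj heq).symm), if_neg h]; ring
      rw [Finset.sum_congr rfl hterm, Finset.sum_ite_eq' E d (fun d' => c d * c d'), if_pos hd]
      ring
    rw [Finset.sum_congr rfl (fun j _ => hdiag j), Finset.sum_const, Nat.card_Icc]
    simp [nsmul_eq_mul]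
    ring
  -- off-diagonal sum is bounded by G
  have hOG : ∀ n : ℕ, |∑ r ∈ (Finset.Icc 1 n).offDiag, Ifun r| ≤ G n := by
    intro n
    have h2 : ∑ r ∈ (Finset.Icc 1 n).offDiag, Ifun r
        = ∑ rd ∈ E ×ˢ E, c rd.1 * c rd.2 * (N rd.1 rd.2 n : ℝ) := by
      calc ∑ r ∈ (Finset.Icc 1 n).offDiag, Ifun r
          = ∑ r ∈ (Finset.Icc 1 n).offDiag, ∑ d ∈ E, ∑ d' ∈ E,
              c d * c d' * (if d * (a r.1 : ℤ) = d' * (a r.2 : ℤ) then (1:ℝ) else 0) :=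
            Finset.sum_congr rfl fun r _ => by rw [hIfun]
        _ = ∑ d ∈ E, ∑ r ∈ (Finset.Icc 1 n).offDiag, ∑ d' ∈ E,
              c d * c d' * (if d * (a r.1 : ℤ) = d' * (a r.2 : ℤ) then (1:ℝ) else 0) :=
            Finset.sum_comm
        _ = ∑ d ∈ E, ∑ d' ∈ E, ∑ r ∈ (Finset.Icc 1 n).offDiag,
              c d * c d' * (if d * (a r.1 : ℤ) = d' * (a r.2 : ℤ) then (1:ℝ) else 0) :=
            Finset.sum_congr rfl fun d _ => Finset.sum_comm
        _ = ∑ d ∈ E, ∑ d' ∈ E, c d * c d' * (N d d' n : ℝ) := by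
            refine Finset.sum_congr rfl fun d _ => Finset.sum_congr rfl fun d' _ => ?_
            rw [← Finset.mul_sum]
            congr 1
            rw [Finset.sum_boole, hN]
            congr 1
            apply congrArg Finset.card
            ext r
            simp only [Finset.mem_filter, Finset.mem_offDiag, Finset.mem_product]
            tauto
        _ = ∑ rd ∈ E ×ˢ E, c rd.1 * c rd.2 * (N rd.1 rd.2 n : ℝ) := by
            rw [Finset.sum_product]
    rw [h2]
    refine le_trans (Finset.abs_sum_le_sum_abs _ _) ?_
    rw [hG]
    refine Finset.sum_le_sum fun rd _ => ?_
    rw [abs_mul, abs_mul, Nat.abs_cast]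
  -- G is little-o of n
  have hGlo : G =o[atTop] (fun n : ℕ => (n : ℝ)) := by
    rw [hG]
    refine Asymptotics.IsLittleO.fun_sum fun rd hrd => ?_
    rw [hE, Finset.mem_product, Finset.mem_Icc, Finset.mem_Icc] at hrd
    by_cases hc1 : c rd.1 = 0
    · have hz : (fun n : ℕ => |c rd.1| * |c rd.2| * (N rd.1 rd.2 n : ℝ)) = fun _ => (0:ℝ) :=
        funext fun n => by rw [hc1]; simp
      rw [hz]; exact Asymptotics.isLittleO_zero _ _
    by_cases hc2 : c rd.2 = 0
    · have hz : (fun n : ℕ => |c rd.1| * |c rd.2| * (N rd.1 rd.2 n : ℝ)) = fun _ => (0:ℝ) :=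
        funext fun n => by rw [hc2]; simp
      rw [hz]; exact Asymptotics.isLittleO_zero _ _
    have hd1 : rd.1 ≠ 0 := fun h => hc1 (by rw [h, h0])
    have hd2 : rd.2 ≠ 0 := fun h => hc2 (by rw [h, h0])
    rcases lt_or_gt_of_ne hd1 with h1 | h1 <;> rcases lt_or_gt_of_ne hd2 with h2 | h2
    · -- both negative
      have hNN : (fun n : ℕ => (N rd.1 rd.2 n : ℝ)) = fun n => (N (-rd.1) (-rd.2) n : ℝ) := by
        funext m
        rw [hN]
        congr 1
        apply congrArg Finset.card
        apply Finset.filter_congr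
        intro p _
        constructor
        · rintro ⟨hne', heq⟩; exact ⟨hne', by rw [neg_mul, neg_mul, neg_inj]; exact heq⟩
        · rintro ⟨hne', heq⟩; refine ⟨hne', ?_⟩; rw [neg_mul, neg_mul, neg_inj] at heq; exact heq
      have : (fun n : ℕ => |c rd.1| * |c rd.2| * (N rd.1 rd.2 n : ℝ))
          = fun n => |c rd.1| * |c rd.2| * (N (-rd.1) (-rd.2) n : ℝ) := by
        funext m; rw [congrFun hNN m]
      rw [this]
      exact (hcount (-rd.1) (by rw [Finset.mem_Icc]; omega) (-rd.2)
        (by rw [Finset.mem_Icc]; omega)).const_mul_left _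
    · -- rd.1 < 0 < rd.2 : count is zero
      have hNz : ∀ m : ℕ, N rd.1 rd.2 m = 0 := by
        intro m
        rw [hN]
        rw [Finset.card_eq_zero, Finset.filter_eq_empty_iff]
        rintro p _ ⟨_, heq⟩
        have ha1 : (0:ℤ) < (a p.1 : ℤ) := by exact_mod_cast hpos p.1
        have ha2 : (0:ℤ) < (a p.2 : ℤ) := by exact_mod_cast hpos p.2
        nlinarith
      have hz : (fun n : ℕ => |c rd.1| * |c rd.2| * (N rd.1 rd.2 n : ℝ)) = fun _ => (0:ℝ) :=
        funext fun n => by rw [hNz n]; simp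
      rw [hz]; exact Asymptotics.isLittleO_zero _ _
    · -- rd.2 < 0 < rd.1 : count is zero
      have hNz : ∀ m : ℕ, N rd.1 rd.2 m = 0 := by
        intro m
        rw [hN]
        rw [Finset.card_eq_zero, Finset.filter_eq_empty_iff]
        rintro p _ ⟨_, heq⟩
        have ha1 : (0:ℤ) < (a p.1 : ℤ) := by exact_mod_cast hpos p.1
        have ha2 : (0:ℤ) < (a p.2 : ℤ) := by exact_mod_cast hpos p.2
        nlinarith
      have hz : (fun n : ℕ => |c rd.1| * |c rd.2| * (N rd.1 rd.2 n : ℝ)) = fun _ => (0:ℝ) :=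
        funext fun n => by rw [hNz n]; simp
      rw [hz]; exact Asymptotics.isLittleO_zero _ _
    · -- both positive
      exact (hcount rd.1 (by rw [Finset.mem_Icc]; omega) rd.2
        (by rw [Finset.mem_Icc]; omega)).const_mul_left _
  -- choose n₀
  have hev : ∀ᶠ n in atTop, ‖G n‖ ≤ (s2/2) * ‖(n:ℝ)‖ :=
    hGlo.def (by positivity)
  obtain ⟨n₀, hn₀⟩ := eventually_atTop.mp hev
  set n₁ : ℕ := max n₀ 1 with hn₁
  have hbig : ∀ n : ℕ, n₀ ≤ n → s2/2 * n ≤ R n := by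
    intro n hn
    have hGn : G n ≤ s2/2 * n := by
      have := hn₀ n hn
      rw [Real.norm_eq_abs, Real.norm_eq_abs, abs_of_nonneg (by positivity : (0:ℝ) ≤ (n:ℝ))] at this
      calc G n ≤ |G n| := le_abs_self _
        _ ≤ s2/2 * n := this
    have hO1 : -(G n) ≤ ∑ r ∈ (Finset.Icc 1 n).offDiag, Ifun r := (abs_le.mp (hOG n)).1
    rw [hsplit n]
    linarith
  -- assemble the final constant
  have hn₁1 : 1 ≤ n₁ := le_max_right _ _
  have hIccne : (Finset.Icc 1 n₁).Nonempty := ⟨1, Finset.mem_Icc.mpr ⟨le_refl 1, hn₁1⟩⟩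
  set eps : ℝ := ((Finset.Icc 1 n₁).image (fun m => R m / m)).min' (hIccne.image _) with heps
  have hepspos : 0 < eps := by
    obtain ⟨m, hm, hmeq⟩ := Finset.mem_image.mp (Finset.min'_mem _ (hIccne.image
      (fun m => R m / m)))
    rw [heps, ← hmeq]
    have hm1 : 1 ≤ m := (Finset.mem_Icc.mp hm).1
    have hmpos : (0:ℝ) < m := by exact_mod_cast hm1
    exact div_pos (hRpos m hm1) hmpos
  refine ⟨min (s2/2) eps, lt_min (by positivity) hepspos, ?_⟩
  intro n
  rw [hInt n]
  rcases Nat.eq_zero_or_pos n with h | h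
  · subst h
    have hR0 : R 0 = 0 := by
      rw [hR]
      simp
    rw [hR0]
    simp
  by_cases hle : n ≤ n₁
  · have hmem : n ∈ Finset.Icc 1 n₁ := Finset.mem_Icc.mpr ⟨h, hle⟩
    have hmin : eps ≤ R n / n := Finset.min'_le _ _ (Finset.mem_image_of_mem _ hmem)
    have hnpos : (0:ℝ) < n := by exact_mod_cast h
    calc min (s2/2) eps * n ≤ (R n / n) * n :=
          mul_le_mul_of_nonneg_right (le_trans (min_le_right _ _) hmin) (le_of_lt hnpos)
      _ = R n := div_mul_cancel₀ _ hnpos.ne'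
  · have hn0 : n₀ ≤ n := by omega
    calc min (s2/2) eps * n ≤ s2/2 * n :=
          mul_le_mul_of_nonneg_right (min_le_left _ _) (Nat.cast_nonneg n)
      _ ≤ R n := hbig n hn0
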